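/- Let γ = 1 or γ = 3/2, let D_φ, D_c, w, Δt > 0, let m_x, m_y ≥ 2, Δx, Δy > 0, set h = min(Δx, Δy) and s = 1/Δx² + 1/Δy², let M_N be the Neumann Kronecker-sum Laplacian of sizes (m_x, m_y) and steps (Δx, Δy), and let N be a real matrix of the same size with ‖N‖₁ ≤ 4·s and ‖N‖_∞ ≤ 4·s. Assume Δt·D_φ·s < γ + w·Δt and Δt·D_c·s < γ. If either h² > 10·D_φ/w or Δt < γ·h²/(10·D_φ − w·h²), and furthermore Δt < γ·h²/(10·D_c), then the spectral radii of the two iteration matrices Δt·D_φ·((γ + w·Δt)·I − Δt·D_φ·M_N)⁻¹·N and Δt·D_c·(γ·I − Δt·D_c·M_N)⁻¹·N are both strictly less than 1. -/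

import Mathlib

open Matrix Kronecker

noncomputable def dirLap (m : ℕ) (Δ : ℝ) : Matrix (Fin m) (Fin m) ℝ :=
  Matrix.of fun i j =>
    if i = j then -2 / Δ ^ 2
    else if (i : ℕ) + 1 = (j : ℕ) ∨ (j : ℕ) + 1 = (i : ℕ) then 1 / Δ ^ 2
    else 0

noncomputable def neuLap (m : ℕ) (Δ : ℝ) : Matrix (Fin m) (Fin m) ℝ :=
  Matrix.of fun i j =>
    if i = j then -2 / Δ ^ 2
    else if ((i : ℕ) = 0 ∧ (j : ℕ) = 1) ∨ ((i : ℕ) = m - 1 ∧ (j : ℕ) = m - 2) then 2 / Δ ^ 2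
    else if (i : ℕ) + 1 = (j : ℕ) ∨ (j : ℕ) + 1 = (i : ℕ) then 1 / Δ ^ 2
    else 0

noncomputable def kronLapD (mx my : ℕ) (Δx Δy : ℝ) :
    Matrix (Fin my × Fin mx) (Fin my × Fin mx) ℝ :=
  (1 : Matrix (Fin my) (Fin my) ℝ) ⊗ₖ dirLap mx Δx +
    dirLap my Δy ⊗ₖ (1 : Matrix (Fin mx) (Fin mx) ℝ)

noncomputable def kronLapN (mx my : ℕ) (Δx Δy : ℝ) :
    Matrix (Fin my × Fin mx) (Fin my × Fin mx) ℝ :=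
  (1 : Matrix (Fin my) (Fin my) ℝ) ⊗ₖ neuLap mx Δx +
    neuLap my Δy ⊗ₖ (1 : Matrix (Fin mx) (Fin mx) ℝ)

noncomputable def specRad {n : Type*} [Fintype n] [DecidableEq n] (A : Matrix n n ℝ) : ℝ :=
  sSup ((fun z : ℂ => ‖z‖) '' spectrum ℂ (A.map Complex.ofReal))

noncomputable def specRadC {n : Type*} [Fintype n] [DecidableEq n] (A : Matrix n n ℂ) : ℝ :=
  sSup ((fun z : ℂ => ‖z‖) '' spectrum ℂ A)

noncomputable def norm1 {n : Type*} [Fintype n] (A : Matrix n n ℝ) : ℝ :=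
  ⨆ j, ∑ i, |A i j|

noncomputable def normInf {n : Type*} [Fintype n] (A : Matrix n n ℝ) : ℝ :=
  ⨆ i, ∑ j, |A i j|

noncomputable def norm2 {n : Type*} [Fintype n] [DecidableEq n] (A : Matrix n n ℝ) : ℝ :=
  ‖Matrix.toEuclideanCLM (𝕜 := ℝ) A‖

noncomputable def Complex.abs : AbsoluteValue ℂ ℝ where
  toFun z := ‖z‖
  map_mul' := norm_mul
  nonneg' := norm_nonneg
  eq_zero' _ := norm_eq_zero
  add_le' := norm_add_le

lemma Complex.abs_ofReal (r : ℝ) : Complex.abs (r : ℂ) = |r| :=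
  show ‖(r : ℂ)‖ = |r| by simp

lemma Complex.norm_eq_abs (z : ℂ) : ‖z‖ = Complex.abs z := rfl

open Finset in
lemma sdd_det_ne_zero {n : Type*} [Fintype n] [DecidableEq n] (M : Matrix n n ℂ)
    (hM : ∀ i, ∑ j ∈ Finset.univ.erase i, Complex.abs (M i j) < Complex.abs (M i i)) :
    M.det ≠ 0 := by
  intro hdet
  obtain ⟨v, hv0, hMv⟩ := (Matrix.exists_mulVec_eq_zero_iff).mpr hdet
  obtain ⟨k, hk⟩ := Function.ne_iff.mp hv0
  have : Nonempty n := ⟨k⟩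
  obtain ⟨i, -, hi⟩ := Finset.exists_max_image Finset.univ (fun j => Complex.abs (v j))
    ⟨k, Finset.mem_univ k⟩
  have hvi : 0 < Complex.abs (v i) :=
    lt_of_lt_of_le (by simpa using hk) (hi k (Finset.mem_univ k))
  have h0 : ∑ j ∈ Finset.univ.erase i, M i j * v j + M i i * v i = 0 := by
    rw [Finset.sum_erase_add Finset.univ _ (Finset.mem_univ i)]
    simpa [Matrix.mulVec, dotProduct] using congrFun hMv i
  have h1 : Complex.abs (M i i) * Complex.abs (v i)
      ≤ ∑ j ∈ Finset.univ.erase i, Complex.abs (M i j) * Complex.abs (v j) := by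
    have : M i i * v i = -∑ j ∈ Finset.univ.erase i, M i j * v j := by
      linear_combination h0
    calc Complex.abs (M i i) * Complex.abs (v i)
        = Complex.abs (∑ j ∈ Finset.univ.erase i, M i j * v j) := by
          rw [← _root_.map_mul, this, map_neg_eq_map]
      _ ≤ ∑ j ∈ Finset.univ.erase i, Complex.abs (M i j * v j) :=
          AbsoluteValue.sum_le _ _ _
      _ = _ := by simp [_root_.map_mul]
  have h2 : ∑ j ∈ Finset.univ.erase i, Complex.abs (M i j) * Complex.abs (v j)
      ≤ (∑ j ∈ Finset.univ.erase i, Complex.abs (M i j)) * Complex.abs (v i) := by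
    rw [Finset.sum_mul]
    exact Finset.sum_le_sum fun j _ => by
      exact mul_le_mul_of_nonneg_left (hi j (Finset.mem_univ j)) (AbsoluteValue.nonneg _ _)
  nlinarith [hM i]

lemma neuLap_diag {m : ℕ} (Δ : ℝ) (i : Fin m) : neuLap m Δ i i = -2 / Δ ^ 2 := by
  simp [neuLap]

lemma neuLap_offdiag_sum {m : ℕ} (hm : 2 ≤ m) {Δ : ℝ} (hΔ : 0 < Δ) (i : Fin m) :
    ∑ j ∈ Finset.univ.erase i, |neuLap m Δ i j| ≤ 2 / Δ ^ 2 := by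
  have hΔ2 : 0 < Δ ^ 2 := by positivity
  by_cases h0 : (i : ℕ) = 0
  · have hj : (⟨1, by omega⟩ : Fin m) ∈ Finset.univ.erase i := by
      simp [Finset.mem_erase, Fin.ext_iff, h0]
    rw [Finset.sum_eq_single_of_mem ⟨1, by omega⟩ hj ?_]
    · have : neuLap m Δ i ⟨1, by omega⟩ = 2 / Δ ^ 2 := by
        rw [neuLap, Matrix.of_apply, if_neg (by simp [Fin.ext_iff] <;> omega),
          if_pos (by simp [h0])]
      rw [this, abs_of_pos (by positivity)]
    · intro j hjm hne
      have hj0 : (j : ℕ) ≠ 0 := fun hc => (Finset.mem_erase.mp hjm).1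
        (Fin.ext (by omega))
      have hj1 : (j : ℕ) ≠ 1 := fun hc => hne (Fin.ext (by simpa using hc))
      rw [neuLap, Matrix.of_apply, if_neg (by simp [Fin.ext_iff] <;> omega),
        if_neg (by omega), if_neg (by omega), abs_zero]
  · by_cases h1 : (i : ℕ) = m - 1
    · have hj : (⟨m - 2, by omega⟩ : Fin m) ∈ Finset.univ.erase i := by
        simp [Finset.mem_erase, Fin.ext_iff]; omega
      rw [Finset.sum_eq_single_of_mem ⟨m - 2, by omega⟩ hj ?_]
      · have : neuLap m Δ i ⟨m - 2, by omega⟩ = 2 / Δ ^ 2 := by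
          rw [neuLap, Matrix.of_apply, if_neg (by simp [Fin.ext_iff] <;> omega),
            if_pos (by simp [h1])]
        rw [this, abs_of_pos (by positivity)]
      · intro j hjm hne
        have hji : (j : ℕ) ≠ m - 1 := fun hc => (Finset.mem_erase.mp hjm).1
          (Fin.ext (by omega))
        have hj2 : (j : ℕ) ≠ m - 2 := fun hc => hne (Fin.ext (by simpa using hc))
        have hjlt := j.isLt
        have hilt := i.isLt
        rw [neuLap, Matrix.of_apply, if_neg (by simp [Fin.ext_iff] <;> omega),
          if_neg (by omega), if_neg (by omega), abs_zero]
    · -- interior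
      have hilt := i.isLt
      have hi1 : 1 ≤ (i : ℕ) := by omega
      have hi2 : (i : ℕ) + 1 < m := by omega
      have hpair : ({⟨(i : ℕ) - 1, by omega⟩, ⟨(i : ℕ) + 1, hi2⟩} : Finset (Fin m))
          ⊆ Finset.univ.erase i := by
        intro j hj
        simp only [Finset.mem_insert, Finset.mem_singleton] at hj
        rcases hj with h | h <;>
          first | (simp [h, Finset.mem_erase, Fin.ext_iff] <;> omega) | simp [h, Finset.mem_erase, Fin.ext_iff]
      rw [← Finset.sum_subset hpair ?_]
      · have hne : (⟨(i : ℕ) - 1, by omega⟩ : Fin m) ≠ ⟨(i : ℕ) + 1, hi2⟩ := by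
          simp only [ne_eq, Fin.mk.injEq]; omega
        rw [Finset.sum_pair hne]
        have e1 : neuLap m Δ i ⟨(i : ℕ) - 1, by omega⟩ = 1 / Δ ^ 2 := by
          rw [neuLap, Matrix.of_apply, if_neg (by simp [Fin.ext_iff] <;> omega),
            if_neg (by simp <;> omega), if_pos (by simp <;> omega)]
        have e2 : neuLap m Δ i ⟨(i : ℕ) + 1, hi2⟩ = 1 / Δ ^ 2 := by
          rw [neuLap, Matrix.of_apply, if_neg (by simp [Fin.ext_iff] <;> omega),
            if_neg (by simp <;> omega), if_pos (by simp <;> omega)]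
        rw [e1, e2, abs_of_pos (by positivity)]
        rw [← add_div]; norm_num
      · intro j hjm hjp
        simp only [Finset.mem_insert, Finset.mem_singleton, not_or] at hjp
        have hji : (j : ℕ) ≠ (i : ℕ) := fun hc => (Finset.mem_erase.mp hjm).1
          (Fin.ext (by omega))
        have hjl : (j : ℕ) ≠ (i : ℕ) - 1 := fun hc => hjp.1 (Fin.ext (by simpa using hc))
        have hjr : (j : ℕ) ≠ (i : ℕ) + 1 := fun hc => hjp.2 (Fin.ext (by simpa using hc))
        rw [neuLap, Matrix.of_apply, if_neg (by simp [Fin.ext_iff] <;> omega),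
          if_neg (by omega), if_neg (by omega), abs_zero]

lemma neuLap_row_sum {m : ℕ} (hm : 2 ≤ m) {Δ : ℝ} (hΔ : 0 < Δ) (i : Fin m) :
    ∑ j, |neuLap m Δ i j| ≤ 4 / Δ ^ 2 := by
  have hΔ2 : 0 < Δ ^ 2 := by positivity
  rw [← Finset.sum_erase_add Finset.univ _ (Finset.mem_univ i)]
  have := neuLap_offdiag_sum hm hΔ i
  have hd : |(-2 : ℝ) / Δ ^ 2| = 2 / Δ ^ 2 := by
    rw [abs_div, abs_of_pos hΔ2]; norm_num
  rw [neuLap_diag, hd]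
  have h4 : (4:ℝ) / Δ ^ 2 = 2 / Δ ^ 2 + 2 / Δ ^ 2 := by ring
  linarith

lemma kron_diag {mx my : ℕ} (Δx Δy : ℝ) (i : Fin my × Fin mx) :
    kronLapN mx my Δx Δy i i = -(2 * (1 / Δx ^ 2 + 1 / Δy ^ 2)) := by
  simp [kronLapN, Matrix.add_apply, Matrix.kroneckerMap_apply, Matrix.one_apply_eq,
    neuLap_diag]
  ring

lemma kron_offdiag_sum {mx my : ℕ} (hmx : 2 ≤ mx) (hmy : 2 ≤ my)
    {Δx Δy : ℝ} (hΔx : 0 < Δx) (hΔy : 0 < Δy) (i : Fin my × Fin mx) :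
    ∑ j ∈ Finset.univ.erase i, |kronLapN mx my Δx Δy i j|
      ≤ 2 * (1 / Δx ^ 2 + 1 / Δy ^ 2) := by
  have hfull : ∑ j, |kronLapN mx my Δx Δy i j| ≤ 4 / Δx ^ 2 + 4 / Δy ^ 2 := by
    have hle : ∀ j, |kronLapN mx my Δx Δy i j|
        ≤ |(1 : Matrix (Fin my) (Fin my) ℝ) i.1 j.1| * |neuLap mx Δx i.2 j.2|
          + |neuLap my Δy i.1 j.1| * |(1 : Matrix (Fin mx) (Fin mx) ℝ) i.2 j.2| := by
      intro j
      calc |kronLapN mx my Δx Δy i j|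
          ≤ |((1 : Matrix (Fin my) (Fin my) ℝ) ⊗ₖ neuLap mx Δx) i j|
            + |(neuLap my Δy ⊗ₖ (1 : Matrix (Fin mx) (Fin mx) ℝ)) i j| := by
            rw [kronLapN]; exact abs_add_le _ _
        _ = _ := by rw [Matrix.kroneckerMap_apply, Matrix.kroneckerMap_apply,
            abs_mul, abs_mul]
    calc ∑ j, |kronLapN mx my Δx Δy i j|
        ≤ ∑ j : Fin my × Fin mx,
            (|(1 : Matrix (Fin my) (Fin my) ℝ) i.1 j.1| * |neuLap mx Δx i.2 j.2|
          + |neuLap my Δy i.1 j.1| * |(1 : Matrix (Fin mx) (Fin mx) ℝ) i.2 j.2|) :=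
          Finset.sum_le_sum fun j _ => hle j
      _ = (∑ jx, |neuLap mx Δx i.2 jx|) + ∑ jy, |neuLap my Δy i.1 jy| := by
          rw [Finset.sum_add_distrib, Fintype.sum_prod_type, Fintype.sum_prod_type]
          congr 1
          · rw [Finset.sum_comm]
            simp [Matrix.one_apply, apply_ite, Finset.sum_ite_eq']
          · simp [Matrix.one_apply, apply_ite, Finset.sum_ite_eq', Finset.mul_sum]
      _ ≤ 4 / Δx ^ 2 + 4 / Δy ^ 2 :=
          add_le_add (neuLap_row_sum hmx hΔx i.2) (neuLap_row_sum hmy hΔy i.1)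
  have herase : ∑ j ∈ Finset.univ.erase i, |kronLapN mx my Δx Δy i j|
      = (∑ j, |kronLapN mx my Δx Δy i j|) - |kronLapN mx my Δx Δy i i| := by
    rw [← Finset.sum_erase_add Finset.univ _ (Finset.mem_univ i)]; ring
  have hdiag : |kronLapN mx my Δx Δy i i| = 2 * (1 / Δx ^ 2 + 1 / Δy ^ 2) := by
    rw [kron_diag, abs_neg, abs_of_pos (by positivity)]
  rw [herase, hdiag]
  have : 4 / Δx ^ 2 + 4 / Δy ^ 2 = 2 * (1 / Δx ^ 2 + 1 / Δy ^ 2) + 2 * (1 / Δx ^ 2 + 1 / Δy ^ 2) := by ring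
  linarith

lemma keyLemma {mx my : ℕ} (hmx : 2 ≤ mx) (hmy : 2 ≤ my)
    {Δx Δy : ℝ} (hΔx : 0 < Δx) (hΔy : 0 < Δy)
    (α c s : ℝ) (hα : 0 < α) (hc : 0 < c) (hs : s = 1 / Δx ^ 2 + 1 / Δy ^ 2)
    (N : Matrix (Fin my × Fin mx) (Fin my × Fin mx) ℝ)
    (hN : ∀ i, ∑ j, |N i j| ≤ 4 * s)
    (hlt : c * (4 * s) < α) :
    specRad (c • ((α • 1 - c • kronLapN mx my Δx Δy)⁻¹ * N)) < 1 := by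
  have hspos : 0 < s := by rw [hs]; positivity
  set M := kronLapN mx my Δx Δy with hM
  set B : Matrix (Fin my × Fin mx) (Fin my × Fin mx) ℝ := α • 1 - c • M with hB
  have hBdiag : ∀ i, B i i = α + 2 * c * s := by
    intro i
    simp only [hB, Matrix.sub_apply, Matrix.smul_apply, Matrix.one_apply_eq, hM,
      kron_diag, smul_eq_mul, hs]
    ring
  have hBoff : ∀ i j, i ≠ j → B i j = -(c * M i j) := by
    intro i j hij
    simp only [hB, Matrix.sub_apply, Matrix.smul_apply, Matrix.one_apply_ne hij,
      smul_eq_mul]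
    ring
  have hBsum : ∀ i, ∑ j ∈ Finset.univ.erase i, |B i j| ≤ 2 * c * s := by
    intro i
    have : ∀ j ∈ Finset.univ.erase i, |B i j| = c * |M i j| := by
      intro j hj
      rw [hBoff i j (fun hc => (Finset.mem_erase.mp hj).1 hc.symm), abs_neg, abs_mul,
        abs_of_pos hc]
    rw [Finset.sum_congr rfl this, ← Finset.mul_sum]
    calc c * ∑ j ∈ Finset.univ.erase i, |M i j|
        ≤ c * (2 * (1 / Δx ^ 2 + 1 / Δy ^ 2)) :=
          mul_le_mul_of_nonneg_left (kron_offdiag_sum hmx hmy hΔx hΔy i) hc.le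
      _ = 2 * c * s := by rw [hs]; ring
  -- B over ℂ is SDD, hence invertible
  have hBcdet : ((B.map Complex.ofReal).det ≠ 0) := by
    apply sdd_det_ne_zero
    intro i
    have he : ∀ j, Complex.abs ((B.map Complex.ofReal) i j) = |B i j| := by
      intro j; rw [Matrix.map_apply, Complex.abs_ofReal]
    rw [Finset.sum_congr rfl fun j _ => he j, he i, hBdiag i,
      abs_of_pos (by positivity)]
    calc ∑ j ∈ Finset.univ.erase i, |B i j| ≤ 2 * c * s := hBsum i
      _ < α + 2 * c * s := by linarith
  have hdetB : B.det ≠ 0 := by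
    intro hd
    apply hBcdet
    have : (B.map Complex.ofReal).det = ((B.det : ℝ) : ℂ) := by
      rw [show B.map Complex.ofReal = Complex.ofRealHom.mapMatrix B from rfl,
        ← RingHom.map_det]
      rfl
    rw [this, hd]
    simp
  have hBinv : B * B⁻¹ = 1 := Matrix.mul_nonsing_inv B (isUnit_iff_ne_zero.mpr hdetB)
  have hkeyR : B * (c • (B⁻¹ * N)) = c • N := by
    rw [Matrix.mul_smul, ← Matrix.mul_assoc, hBinv, Matrix.one_mul]
  set A : Matrix (Fin my × Fin mx) (Fin my × Fin mx) ℝ := c • (B⁻¹ * N) with hA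
  have hmul : (B.map Complex.ofReal) * (A.map Complex.ofReal)
      = (c : ℂ) • (N.map Complex.ofReal) := by
    ext i j
    have h1 : (B * A) i j = c * N i j := by rw [hkeyR]; simp [Matrix.smul_apply]
    simp only [Matrix.mul_apply, Matrix.map_apply, Matrix.smul_apply, smul_eq_mul] at h1 ⊢
    rw [show ((c : ℂ) * ((N i j : ℝ) : ℂ)) = ((c * N i j : ℝ) : ℂ) by push_cast; ring,
      ← h1]
    push_cast
    ring
  rw [specRad]
  have hr1 : c * (4 * s) / α < 1 := (div_lt_one hα).mpr hlt
  refine lt_of_le_of_lt (Real.sSup_le ?_ (by positivity)) hr1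
  rintro x ⟨μ, hμ, rfl⟩
  by_contra hgt
  push_neg at hgt
  rw [spectrum.mem_iff] at hμ
  apply hμ
  rw [Algebra.algebraMap_eq_smul_one]
  set Bc := B.map Complex.ofReal
  set Nc := N.map Complex.ofReal
  set Ac := A.map Complex.ofReal
  have hE : Bc * (μ • 1 - Ac) = μ • Bc - (c : ℂ) • Nc := by
    rw [Matrix.mul_sub, Matrix.mul_smul, Matrix.mul_one, hmul]
  have habμ : c * (4 * s) < Complex.abs μ * α := by
    have := (div_lt_iff₀ hα).mp hgt
    exact this
  have hEdet : (μ • Bc - (c : ℂ) • Nc).det ≠ 0 := by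
    apply sdd_det_ne_zero
    intro i
    have hentry : ∀ j, (μ • Bc - (c : ℂ) • Nc) i j = μ * (B i j : ℂ) - (c : ℂ) * (N i j : ℂ) := by
      intro j
      simp [Bc, Nc, Matrix.sub_apply, Matrix.smul_apply, Matrix.map_apply, smul_eq_mul]
    have hub : ∀ j, Complex.abs ((μ • Bc - (c : ℂ) • Nc) i j)
        ≤ Complex.abs μ * |B i j| + c * |N i j| := by
      intro j
      rw [hentry j]
      calc Complex.abs (μ * (B i j : ℂ) - (c : ℂ) * (N i j : ℂ))
          ≤ Complex.abs (μ * (B i j : ℂ)) + Complex.abs ((c : ℂ) * (N i j : ℂ)) := by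
            exact (AbsoluteValue.sub_le_add _ _ _)
        _ = Complex.abs μ * |B i j| + c * |N i j| := by
            rw [_root_.map_mul, _root_.map_mul, Complex.abs_ofReal, Complex.abs_ofReal,
              Complex.abs_ofReal, abs_of_pos hc]
    have hlb : Complex.abs μ * (α + 2 * c * s) - c * |N i i|
        ≤ Complex.abs ((μ • Bc - (c : ℂ) • Nc) i i) := by
      rw [hentry i]
      have h2 : Complex.abs (μ * (B i i : ℂ)) - Complex.abs ((c : ℂ) * (N i i : ℂ))
          ≤ Complex.abs (μ * (B i i : ℂ) - (c : ℂ) * (N i i : ℂ)) := by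
        exact
          norm_sub_norm_le (μ * (B i i : ℂ)) ((c : ℂ) * (N i i : ℂ))
      calc Complex.abs μ * (α + 2 * c * s) - c * |N i i|
          = Complex.abs (μ * (B i i : ℂ)) - Complex.abs ((c : ℂ) * (N i i : ℂ)) := by
            rw [_root_.map_mul, _root_.map_mul, Complex.abs_ofReal, Complex.abs_ofReal,
              Complex.abs_ofReal, abs_of_pos hc, hBdiag i,
              abs_of_pos (show (0:ℝ) < α + 2 * c * s by positivity)]
        _ ≤ _ := h2
    have hsum : ∑ j ∈ Finset.univ.erase i, Complex.abs ((μ • Bc - (c : ℂ) • Nc) i j)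
        ≤ Complex.abs μ * (∑ j ∈ Finset.univ.erase i, |B i j|)
          + c * ∑ j ∈ Finset.univ.erase i, |N i j| := by
      calc ∑ j ∈ Finset.univ.erase i, Complex.abs ((μ • Bc - (c : ℂ) • Nc) i j)
          ≤ ∑ j ∈ Finset.univ.erase i, (Complex.abs μ * |B i j| + c * |N i j|) :=
            Finset.sum_le_sum fun j _ => hub j
        _ = _ := by rw [Finset.sum_add_distrib, Finset.mul_sum, Finset.mul_sum]
    have hNrow : ∑ j ∈ Finset.univ.erase i, |N i j| + |N i i| ≤ 4 * s := by
      rw [Finset.sum_erase_add Finset.univ _ (Finset.mem_univ i)]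
      exact hN i
    have t1 : Complex.abs μ * (∑ j ∈ Finset.univ.erase i, |B i j|)
        ≤ Complex.abs μ * (2 * c * s) :=
      mul_le_mul_of_nonneg_left (hBsum i) (AbsoluteValue.nonneg _ _)
    have t2 : c * (∑ j ∈ Finset.univ.erase i, |N i j|) + c * |N i i| ≤ c * (4 * s) := by
      nlinarith [hNrow, hc.le]
    calc ∑ j ∈ Finset.univ.erase i, Complex.abs ((μ • Bc - (c : ℂ) • Nc) i j)
        ≤ Complex.abs μ * (∑ j ∈ Finset.univ.erase i, |B i j|)
          + c * ∑ j ∈ Finset.univ.erase i, |N i j| := hsum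
      _ < Complex.abs μ * (α + 2 * c * s) - c * |N i i| := by linarith
      _ ≤ Complex.abs ((μ • Bc - (c : ℂ) • Nc) i i) := hlb
  have hXdet : (μ • (1 : Matrix (Fin my × Fin mx) (Fin my × Fin mx) ℂ) - Ac).det ≠ 0 := by
    intro hd
    apply hEdet
    rw [← hE, Matrix.det_mul, hd, mul_zero]
  exact (Matrix.isUnit_iff_isUnit_det _).mpr (isUnit_iff_ne_zero.mpr hXdet)

theorem stmt14 (γ : ℝ) (hγ : γ = 1 ∨ γ = 3 / 2)
    (Dφ Dc w Δt : ℝ) (hDφ : 0 < Dφ) (hDc : 0 < Dc) (hw : 0 < w) (hΔt : 0 < Δt)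
    (mx my : ℕ) (hmx : 2 ≤ mx) (hmy : 2 ≤ my)
    (Δx Δy : ℝ) (hΔx : 0 < Δx) (hΔy : 0 < Δy)
    (h s : ℝ) (hh : h = min Δx Δy) (hs : s = 1 / Δx ^ 2 + 1 / Δy ^ 2)
    (MN N : Matrix (Fin my × Fin mx) (Fin my × Fin mx) ℝ)
    (hMN : MN = kronLapN mx my Δx Δy)
    (hN1 : norm1 N ≤ 4 * s)
    (hNinf : normInf N ≤ 4 * s)
    (hA1 : Δt * Dφ * s < γ + w * Δt)
    (hA2 : Δt * Dc * s < γ)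
    (hcond1 : h ^ 2 > 10 * Dφ / w ∨ Δt < γ * h ^ 2 / (10 * Dφ - w * h ^ 2))
    (hcond2 : Δt < γ * h ^ 2 / (10 * Dc)) :
    specRad ((Δt * Dφ) • (((γ + w * Δt) • 1 - (Δt * Dφ) • MN)⁻¹ * N)) < 1 ∧
      specRad ((Δt * Dc) • ((γ • 1 - (Δt * Dc) • MN)⁻¹ * N)) < 1 := by
  subst hMN
  have hγ0 : 0 < γ := by rcases hγ with h | h <;> rw [h] <;> norm_num
  have hhpos : 0 < h := by rw [hh]; exact lt_min hΔx hΔy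
  have hh2 : 0 < h ^ 2 := by positivity
  have hx : h ≤ Δx := by rw [hh]; exact min_le_left _ _
  have hy : h ≤ Δy := by rw [hh]; exact min_le_right _ _
  have hsx : 1 / Δx ^ 2 ≤ 1 / h ^ 2 :=
    one_div_le_one_div_of_le (by positivity) (pow_le_pow_left₀ hhpos.le hx 2)
  have hsy : 1 / Δy ^ 2 ≤ 1 / h ^ 2 :=
    one_div_le_one_div_of_le (by positivity) (pow_le_pow_left₀ hhpos.le hy 2)
  have h4s : 4 * s ≤ 8 / h ^ 2 := by
    have e : (8:ℝ) / h ^ 2 = 4 * (1 / h ^ 2) + 4 * (1 / h ^ 2) := by ring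
    rw [hs]; linarith
  have bound : ∀ c α : ℝ, 0 < c → c * 8 < α * h ^ 2 → c * (4 * s) < α := by
    intro c α hc hca
    have h1 : c * (4 * s) ≤ c * (8 / h ^ 2) := mul_le_mul_of_nonneg_left h4s hc.le
    have h2 : c * (8 / h ^ 2) < α := by
      rw [show c * (8 / h ^ 2) = c * 8 / h ^ 2 by ring]
      exact (div_lt_iff₀ hh2).mpr hca
    linarith
  have hNrow : ∀ i, ∑ j, |N i j| ≤ 4 * s := by
    intro i
    exact le_trans
      (le_ciSup (f := fun i => ∑ j, |N i j|) (Set.Finite.bddAbove (Set.finite_range _)) i)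
      hNinf
  have hlt1 : Δt * Dφ * (4 * s) < γ + w * Δt := by
    apply bound _ _ (mul_pos hΔt hDφ)
    rcases hcond1 with hgt | hlt'
    · have h10 : 10 * Dφ < w * h ^ 2 := by
        have := (div_lt_iff₀ hw).mp hgt
        linarith
      linarith [mul_lt_mul_of_pos_left h10 hΔt, mul_pos hγ0 hh2,
        (mul_pos hΔt hDφ).le]
    · rcases lt_or_ge 0 (10 * Dφ - w * h ^ 2) with hd | hd
      · have hda : Δt * (10 * Dφ - w * h ^ 2) < γ * h ^ 2 := by
          have := (lt_div_iff₀ hd).mp hlt'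
          linarith
        linarith [mul_pos hΔt hDφ, hda]
      · exfalso
        have : γ * h ^ 2 / (10 * Dφ - w * h ^ 2) ≤ 0 :=
          div_nonpos_of_nonneg_of_nonpos (by positivity) hd
        linarith
  have hlt2 : Δt * Dc * (4 * s) < γ := by
    apply bound _ _ (mul_pos hΔt hDc)
    have hda : Δt * (10 * Dc) < γ * h ^ 2 := by
      have := (lt_div_iff₀ (by positivity : (0:ℝ) < 10 * Dc)).mp hcond2
      linarith
    linarith [mul_pos hΔt hDc, hda]
  constructor
  · exact keyLemma hmx hmy hΔx hΔy (γ + w * Δt) (Δt * Dφ) s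
      (by positivity) (mul_pos hΔt hDφ) hs N hNrow hlt1
  · exact keyLemma hmx hmy hΔx hΔy γ (Δt * Dc) s
      hγ0 (mul_pos hΔt hDc) hs N hNrow hlt2
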